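/- Let G be a graph and let t, t' be nontrivial terms. Then G satisfies the identity t ≈ t' if and only if the set of homomorphisms of G(t) into G equals the set of homomorphisms of G(t') into G (as maps defined on var(t) ∪ var(t') restricted appropriately, i.e., Hom(G(t),G) = Hom(G(t'),G) =: H) and h(L(t)) = h(L(t')) for every h ∈ H. -/

import Mathlib

open Classical

/-- A graph `(V, E)`: an ambient type `U`, a set `verts ⊆ U` of vertices and an
edge relation `Edge ⊆ verts × verts`. -/
structure AlgGraph : Type 1 where
  U : Type
  verts : Set U
  Edge : U → U → Prop
  edge_mem : ∀ a b, Edge a b → a ∈ verts ∧ b ∈ verts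

namespace AlgGraph

/-- The induced subgraph of `G` on a set `S`. -/
def induce (G : AlgGraph) (S : Set G.U) : AlgGraph where
  U := G.U
  verts := G.verts ∩ S
  Edge a b := G.Edge a b ∧ a ∈ S ∧ b ∈ S
  edge_mem a b h := ⟨⟨(G.edge_mem a b h.1).1, h.2.1⟩, (G.edge_mem a b h.1).2, h.2.2⟩

/-- The set of vertices reachable from `a` by a directed walk (including `a` itself). -/
def reachSet (G : AlgGraph) (a : G.U) : Set G.U := {b | Relation.ReflTransGen G.Edge a b}

/-- The subgraph of `G` induced by the set of vertices reachable from `a`. -/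
def reachSub (G : AlgGraph) (a : G.U) : AlgGraph := G.induce (G.reachSet a)

/-- A graph is undirected if its edge relation is symmetric. -/
def Undirected (G : AlgGraph) : Prop := ∀ a b, G.Edge a b → G.Edge b a

end AlgGraph

/-- A homomorphism of graphs: maps vertices to vertices and edges to edges. -/
def IsHom (G H : AlgGraph) (f : G.U → H.U) : Prop :=
  (∀ a ∈ G.verts, f a ∈ H.verts) ∧ ∀ a b, G.Edge a b → H.Edge (f a) (f b)

/-- A strong homomorphism: additionally maps non-edges to non-edges. -/
def IsStrongHom (G H : AlgGraph) (f : G.U → H.U) : Prop :=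
  IsHom G H f ∧ ∀ a ∈ G.verts, ∀ b ∈ G.verts, ¬ G.Edge a b → ¬ H.Edge (f a) (f b)

/-- Isomorphism of graphs. -/
def IsIsomorphic (G H : AlgGraph) : Prop :=
  ∃ f : G.U → H.U, Set.BijOn f G.verts H.verts ∧
    ∀ a ∈ G.verts, ∀ b ∈ G.verts, (G.Edge a b ↔ H.Edge (f a) (f b))

/-- Terms of type (2,0) over a variable set `X`: variables, the constant `∞`,
and a binary operation (juxtaposition). -/
inductive GTerm (X : Type) : Type
  | var : X → GTerm X
  | inf : GTerm X
  | app : GTerm X → GTerm X → GTerm X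

namespace GTerm

/-- The set of variables occurring in a term. -/
def vars {X : Type} : GTerm X → Set X
  | var x => {x}
  | inf => ∅
  | app t₁ t₂ => t₁.vars ∪ t₂.vars

/-- A term is nontrivial if it contains no occurrence of `∞`. -/
def Nontrivial {X : Type} : GTerm X → Prop
  | var _ => True
  | inf => False
  | app t₁ t₂ => t₁.Nontrivial ∧ t₂.Nontrivial

/-- The leftmost variable of a term (`none` for the bare constant `∞` on the left). -/
def leftVar {X : Type} : GTerm X → Option X
  | var x => some x
  | inf => none
  | app t₁ _ => t₁.leftVar

/-- The edge set of the term graph `G(t)`. -/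
def edges {X : Type} : GTerm X → Set (X × X)
  | var _ => ∅
  | inf => ∅
  | app t₁ t₂ =>
      t₁.edges ∪ t₂.edges ∪
        {p | ∃ x y, t₁.leftVar = some x ∧ t₂.leftVar = some y ∧ p = (x, y)}

theorem vars_finite {X : Type} (t : GTerm X) : t.vars.Finite := by
  induction t with
  | var x => simpa [vars] using Set.finite_singleton x
  | inf => simpa [vars] using Set.finite_empty
  | app t₁ t₂ ih₁ ih₂ => simpa [vars] using ih₁.union ih₂

end GTerm

/-- The term graph `G(t)` of a term `t`: vertices are the variables of `t`. -/
def termGraph {X : Type} (t : GTerm X) : AlgGraph where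
  U := X
  verts := t.vars
  Edge a b := (a, b) ∈ t.edges ∧ a ∈ t.vars ∧ b ∈ t.vars
  edge_mem a b h := ⟨h.2.1, h.2.2⟩

/-- Evaluation of a term in the graph algebra `A(G)`; `none` plays the role of `∞`:
`x · y = x` if `(x,y)` is an edge, and `∞` otherwise. -/
noncomputable def AlgGraph.eval (G : AlgGraph) {X : Type} (h : X → Option G.U) :
    GTerm X → Option G.U
  | .var x => h x
  | .inf => none
  | .app t₁ t₂ =>
      match G.eval h t₁, G.eval h t₂ with
      | some a, some b => if G.Edge a b then some a else none
      | _, _ => none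

/-- Identities: pairs of terms. -/
abbrev GId (X : Type) := GTerm X × GTerm X

/-- An assignment takes values in `V(G) ∪ {∞}`. -/
def AlgGraph.Assign (G : AlgGraph) {X : Type} (h : X → Option G.U) : Prop :=
  ∀ x a, h x = some a → a ∈ G.verts

/-- The assignment `h` makes the identity `e` true in `A(G)`. -/
def AlgGraph.SatIdWith (G : AlgGraph) {X : Type} (h : X → Option G.U) (e : GId X) : Prop :=
  G.eval h e.1 = G.eval h e.2

/-- `G` satisfies the identity `e`. -/
def AlgGraph.SatId (G : AlgGraph) {X : Type} (e : GId X) : Prop :=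
  ∀ h : X → Option G.U, G.Assign h → G.SatIdWith h e

/-- An implication (quasi-identity) over the standard countably infinite
variable set `ℕ`: a finite set of identities (the premise) and an identity
(the consequence). -/
structure Imp : Type where
  prem : Set (GId ℕ)
  concl : GId ℕ
  prem_fin : prem.Finite

/-- `G` satisfies the implication `imp`. -/
def AlgGraph.SatImp (G : AlgGraph) (imp : Imp) : Prop :=
  ∀ h : ℕ → Option G.U, G.Assign h →
    (∀ e ∈ imp.prem, G.SatIdWith h e) → G.SatIdWith h imp.concl

/-- The implications satisfied by every member of a class `K` of graphs. -/
def qId (K : Set AlgGraph) : Set Imp := {imp | ∀ G ∈ K, G.SatImp imp}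

/-- The class of graphs satisfying every implication of `Sg`. -/
def ModI (Sg : Set Imp) : Set AlgGraph := {G | ∀ imp ∈ Sg, G.SatImp imp}

/-- The finite members of `ModI Sg`. -/
def ModIf (Sg : Set Imp) : Set AlgGraph := {G | G ∈ ModI Sg ∧ G.verts.Finite}

/-- The pointed graph `G^⊥`: a new vertex `⊥ = none` with edges from `⊥` to all
vertices, including a loop at `⊥`. -/
def AlgGraph.pointed (G : AlgGraph) : AlgGraph where
  U := Option G.U
  verts := insert none (some '' G.verts)
  Edge a b := b ∈ insert none (some '' G.verts) ∧
    (a = none ∨ ∃ u v, a = some u ∧ b = some v ∧ G.Edge u v)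
  edge_mem a b h := by
    refine ⟨?_, h.1⟩
    rcases h.2 with rfl | ⟨u, v, rfl, rfl, huv⟩
    · exact Set.mem_insert _ _
    · exact Set.mem_insert_of_mem _ ⟨u, (G.edge_mem u v huv).1, rfl⟩

/-- Direct product of a family of graphs (componentwise edges). -/
def gProd {I : Type} (G : I → AlgGraph) : AlgGraph where
  U := (i : I) → (G i).U
  verts := {a | ∀ i, a i ∈ (G i).verts}
  Edge a b := ∀ i, (G i).Edge (a i) (b i)
  edge_mem a b h :=
    ⟨fun i => ((G i).edge_mem _ _ (h i)).1, fun i => ((G i).edge_mem _ _ (h i)).2⟩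

/-- The pointed product `∏ i, (G i)^⊥` of a family of graphs. -/
def pointedProd {I : Type} (G : I → AlgGraph) : AlgGraph := gProd fun i => (G i).pointed

/-- `W` is a strong pointed subproduct of the family `G`:
(1) `W` is an induced subgraph of the pointed product;
(2) every vertex has nonempty support;
(3) for every vertex `a` and every `k` in the support of `a`, the projection `p k`
restricted to `reach_W(a)` is a strong homomorphism into `G k`. -/
def IsSPSofFam {I : Type} (G : I → AlgGraph) (W : AlgGraph) : Prop :=
  ∃ S : Set (pointedProd G).U,
    W = (pointedProd G).induce S ∧
    (∀ a ∈ ((pointedProd G).induce S).verts, ∃ i, a i ≠ none) ∧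
    (∀ a ∈ ((pointedProd G).induce S).verts, ∀ k : I, a k ≠ none →
      (∀ b ∈ (((pointedProd G).induce S).reachSub a).verts, b k ≠ none) ∧
      (∀ b ∈ (((pointedProd G).induce S).reachSub a).verts,
        ∀ u, b k = some u → u ∈ (G k).verts) ∧
      (∀ b ∈ (((pointedProd G).induce S).reachSub a).verts,
       ∀ c ∈ (((pointedProd G).induce S).reachSub a).verts,
        ∀ u v, b k = some u → c k = some v →
          ((((pointedProd G).induce S).reachSub a).Edge b c ↔ (G k).Edge u v)))

/-- The class of all strong pointed subproducts of families of members of `K`. -/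
def Psps (K : Set AlgGraph) : Set AlgGraph :=
  {W | ∃ (I : Type) (G : I → AlgGraph), (∀ i, G i ∈ K) ∧ IsSPSofFam G W}

/-- The finite members of `Psps K`. -/
def PspsFin (K : Set AlgGraph) : Set AlgGraph := {W | W ∈ Psps K ∧ W.verts.Finite}

/-- Isomorphic copies of members of a class of graphs. -/
def Icl (C : Set AlgGraph) : Set AlgGraph := {W | ∃ V ∈ C, IsIsomorphic V W}

/-- `W` is the union of a directed family of members of `C` (the members of the
family are induced subgraphs of a common member, pairwise). -/
def IsDirUnionOf (W : AlgGraph) (C : Set AlgGraph) : Prop :=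
  ∃ (ι : Type) (V : ι → Set W.U) (E : ι → W.U → W.U → Prop)
    (hmem : ∀ i, ∀ a b, E i a b → a ∈ V i ∧ b ∈ V i),
    (∀ i, AlgGraph.mk W.U (V i) (E i) (hmem i) ∈ C) ∧
    (∀ i j, ∃ k,
      (V i ⊆ V k ∧ ∀ a b, E i a b ↔ E k a b ∧ a ∈ V i ∧ b ∈ V i) ∧
      (V j ⊆ V k ∧ ∀ a b, E j a b ↔ E k a b ∧ a ∈ V j ∧ b ∈ V j)) ∧
    W.verts = ⋃ i, V i ∧
    ∀ a b, W.Edge a b ↔ ∃ i, E i a b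

/-- The class of all directed unions of members of `C`. -/
def DCl (C : Set AlgGraph) : Set AlgGraph := {W | IsDirUnionOf W C}

/-- Condition (a) of Proposition `IPK-ab`. -/
def CondA (K : Set AlgGraph) (W : AlgGraph) : Prop :=
  ∀ a ∈ W.verts, ∃ Ga ∈ K, ∃ φ : W.U → Ga.U, IsStrongHom (W.reachSub a) Ga φ

/-- Condition (b) of Proposition `IPK-ab`. -/
def CondB (K : Set AlgGraph) (W : AlgGraph) : Prop :=
  ∀ a ∈ W.verts, ∀ a' ∈ W.verts, a ≠ a' → W.reachSet a = W.reachSet a' →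
    ∃ Gp ∈ K, ∃ φ : W.U → Gp.U, IsStrongHom (W.reachSub a) Gp φ ∧ φ a ≠ φ a'

/-- The identities `x_a x_b ≈ x_a` for edges `(a,b)` of `G` (variables are the
vertices of `G`). -/
def GammaE (G : AlgGraph) : Set (GId G.U) :=
  {e | ∃ a b, G.Edge a b ∧ e = (GTerm.app (GTerm.var a) (GTerm.var b), GTerm.var a)}

/-- The identities `x_a x_b ≈ ∞` for non-edges `(a,b)` of `G`. -/
def GammaN (G : AlgGraph) : Set (GId G.U) :=
  {e | ∃ a b, a ∈ G.verts ∧ b ∈ G.verts ∧ ¬ G.Edge a b ∧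
    e = (GTerm.app (GTerm.var a) (GTerm.var b), GTerm.inf)}

/-- `Σ(G) = Γ_e(G) ∪ Γ_n(G)`. -/
def SigmaIds (G : AlgGraph) : Set (GId G.U) := GammaE G ∪ GammaN G

theorem SigmaIds_finite (G : AlgGraph) (hfin : G.verts.Finite) : (SigmaIds G).Finite := by
  classical
  have hsub : SigmaIds G ⊆
      (fun p : G.U × G.U =>
        if G.Edge p.1 p.2 then
          (GTerm.app (GTerm.var p.1) (GTerm.var p.2), GTerm.var p.1)
        else (GTerm.app (GTerm.var p.1) (GTerm.var p.2), GTerm.inf)) ''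
        (G.verts ×ˢ G.verts) := by
    rintro e (⟨a, b, hab, rfl⟩ | ⟨a, b, ha, hb, hnab, rfl⟩)
    · exact ⟨(a, b), Set.mk_mem_prod (G.edge_mem a b hab).1 (G.edge_mem a b hab).2,
        by simp [hab]⟩
    · exact ⟨(a, b), Set.mk_mem_prod ha hb, by simp [hnab]⟩
  exact ((hfin.prod hfin).image _).subset hsub

/-- The set of homomorphisms of the term graph `G(t)` into `G`, encoded as
partial maps `X → V(G) ∪ {∞}` whose domain of definition is exactly `var(t)`. -/
def PHomSet (G : AlgGraph) {X : Type} (t : GTerm X) : Set (X → Option G.U) :=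
  {h | (∀ x, h x ≠ none ↔ x ∈ t.vars) ∧
       (∀ x a, h x = some a → a ∈ G.verts) ∧
       (∀ x y, (termGraph t).Edge x y →
         ∃ a b, h x = some a ∧ h y = some b ∧ G.Edge a b)}


section Aux

variable {X : Type}

lemma leftVar_mem_vars : ∀ {t : GTerm X} {x : X}, t.leftVar = some x → x ∈ t.vars
  | .var y, x, h => by simp [GTerm.leftVar] at h; simp [GTerm.vars, h]
  | .inf, x, h => by simp [GTerm.leftVar] at h
  | .app t₁ t₂, x, h => by
      simp only [GTerm.leftVar] at h
      exact Or.inl (leftVar_mem_vars h)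

lemma nontrivial_leftVar : ∀ {t : GTerm X}, t.Nontrivial → ∃ x, t.leftVar = some x
  | .var y, _ => ⟨y, rfl⟩
  | .inf, h => h.elim
  | .app t₁ t₂, h => by
      obtain ⟨x, hx⟩ := nontrivial_leftVar h.1
      exact ⟨x, hx⟩

lemma edges_mem_vars : ∀ {t : GTerm X} {x y : X}, (x, y) ∈ t.edges →
    x ∈ t.vars ∧ y ∈ t.vars
  | .var _, x, y, h => by simp [GTerm.edges] at h
  | .inf, x, y, h => by simp [GTerm.edges] at h
  | .app t₁ t₂, x, y, h => by
      rcases h with (h | h) | h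
      · exact ⟨Or.inl (edges_mem_vars h).1, Or.inl (edges_mem_vars h).2⟩
      · exact ⟨Or.inr (edges_mem_vars h).1, Or.inr (edges_mem_vars h).2⟩
      · obtain ⟨a, b, ha, hb, hp⟩ := h
        obtain ⟨rfl, rfl⟩ : x = a ∧ y = b := by
          have := Prod.mk.injEq x y a b ▸ hp
          exact Prod.mk.inj hp
        exact ⟨Or.inl (leftVar_mem_vars ha), Or.inr (leftVar_mem_vars hb)⟩

/-- `eval` only depends on values on the variables of the term. -/
lemma eval_congr (G : AlgGraph) {h h' : X → Option G.U} :
    ∀ (t : GTerm X), (∀ x ∈ t.vars, h x = h' x) → G.eval h t = G.eval h' t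
  | .var x, hag => hag x (by simp [GTerm.vars])
  | .inf, _ => rfl
  | .app t₁ t₂, hag => by
      have h1 := eval_congr G t₁ fun x hx => hag x (Or.inl hx)
      have h2 := eval_congr G t₂ fun x hx => hag x (Or.inr hx)
      simp only [AlgGraph.eval, h1, h2]

/-- Key characterization of evaluation for nontrivial terms. -/
lemma eval_spec (G : AlgGraph) (h : X → Option G.U) :
    ∀ (t : GTerm X), t.Nontrivial →
      ((G.eval h t ≠ none ↔
        ((∀ x ∈ t.vars, h x ≠ none) ∧
         ∀ x y, (x, y) ∈ t.edges →
           ∃ a b, h x = some a ∧ h y = some b ∧ G.Edge a b)) ∧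
       (G.eval h t ≠ none → ∀ x0, t.leftVar = some x0 → G.eval h t = h x0))
  | .var x, _ => by
      constructor
      · simp [AlgGraph.eval, GTerm.vars, GTerm.edges]
      · intro _ x0 hx0
        simp [GTerm.leftVar] at hx0
        simp [AlgGraph.eval, hx0]
  | .inf, hnt => hnt.elim
  | .app t₁ t₂, hnt => by
      obtain ⟨hnt1, hnt2⟩ := hnt
      obtain ⟨I1, L1⟩ := eval_spec G h t₁ hnt1
      obtain ⟨I2, L2⟩ := eval_spec G h t₂ hnt2
      obtain ⟨y1, hy1⟩ := nontrivial_leftVar (X := X) hnt1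
      obtain ⟨y2, hy2⟩ := nontrivial_leftVar (X := X) hnt2
      constructor
      · constructor
        · intro hne
          simp only [AlgGraph.eval] at hne
          rcases e1 : G.eval h t₁ with _ | a
          · simp [e1] at hne
          rcases e2 : G.eval h t₂ with _ | b
          · simp [e1, e2] at hne
          have hEab : G.Edge a b := by
            by_contra hc
            simp [e1, e2, hc] at hne
          have hc1 := I1.1 (by simp [e1])
          have hc2 := I2.1 (by simp [e2])
          have hv1 : h y1 = some a := by
            have := L1 (by simp [e1]) y1 hy1
            rw [e1] at this; exact this.symm
          have hv2 : h y2 = some b := by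
            have := L2 (by simp [e2]) y2 hy2
            rw [e2] at this; exact this.symm
          refine ⟨fun x hx => ?_, fun x y hxy => ?_⟩
          · rcases hx with hx | hx
            · exact hc1.1 x hx
            · exact hc2.1 x hx
          · rcases hxy with (hxy | hxy) | hxy
            · exact hc1.2 x y hxy
            · exact hc2.2 x y hxy
            · obtain ⟨u, v, hu, hv, hp⟩ := hxy
              obtain ⟨rfl, rfl⟩ := Prod.mk.inj hp
              rw [hy1] at hu; rw [hy2] at hv
              obtain rfl := Option.some.inj hu
              obtain rfl := Option.some.inj hv
              exact ⟨a, b, hv1, hv2, hEab⟩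
        · rintro ⟨hdom, hedge⟩
          have hd1 : G.eval h t₁ ≠ none :=
            I1.2 ⟨fun x hx => hdom x (Or.inl hx), fun x y hxy => hedge x y (Or.inl (Or.inl hxy))⟩
          have hd2 : G.eval h t₂ ≠ none :=
            I2.2 ⟨fun x hx => hdom x (Or.inr hx), fun x y hxy => hedge x y (Or.inl (Or.inr hxy))⟩
          have e1 : G.eval h t₁ = h y1 := L1 hd1 y1 hy1
          have e2 : G.eval h t₂ = h y2 := L2 hd2 y2 hy2
          obtain ⟨a, b, hu, hv, hE⟩ := hedge y1 y2 (Or.inr ⟨y1, y2, hy1, hy2, rfl⟩)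
          simp only [AlgGraph.eval, e1, e2, hu, hv, if_pos hE]
          exact Option.some_ne_none a
      · intro hne x0 hx0
        simp only [GTerm.leftVar] at hx0
        simp only [AlgGraph.eval] at hne ⊢
        rcases e1 : G.eval h t₁ with _ | a
        · simp [e1] at hne
        rcases e2 : G.eval h t₂ with _ | b
        · simp [e1, e2] at hne
        have hEab : G.Edge a b := by
          by_contra hc
          simp [e1, e2, hc] at hne
        have := L1 (by simp [e1]) x0 hx0
        rw [e1] at this
        simp [if_pos hEab, this.symm]

/-- Forward inclusion helper. -/
lemma phom_incl (G : AlgGraph) (t t' : GTerm X)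
    (ht : t.Nontrivial) (ht' : t'.Nontrivial)
    (x0 x0' : X) (hx0 : t.leftVar = some x0) (hx0' : t'.leftVar = some x0')
    (hsat : G.SatId (t, t')) :
    ∀ h ∈ PHomSet G t, h ∈ PHomSet G t' ∧ h x0 = h x0' := by
  intro h hmem
  obtain ⟨hdom, hval, hedge⟩ := hmem
  have hA : G.Assign h := fun x a hx => hval x a hx
  -- eval h t ≠ none
  have het : G.eval h t ≠ none := by
    refine (eval_spec G h t ht).1.2 ⟨fun x hx => (hdom x).2 hx, fun x y hxy => ?_⟩
    exact hedge x y ⟨hxy, (edges_mem_vars hxy).1, (edges_mem_vars hxy).2⟩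
  have heq : G.eval h t = G.eval h t' := hsat h hA
  have het' : G.eval h t' ≠ none := heq ▸ het
  obtain ⟨hdom', hedge'⟩ := (eval_spec G h t' ht').1.1 het'
  have evt : G.eval h t = h x0 := (eval_spec G h t ht).2 het x0 hx0
  have evt' : G.eval h t' = h x0' := (eval_spec G h t' ht').2 het' x0' hx0'
  -- vars t ⊆ vars t'
  have hsub : t.vars ⊆ t'.vars := by
    intro x hx
    by_contra hxn
    set h2 : X → Option G.U := fun y => if y = x then none else h y with hh2
    have hA2 : G.Assign h2 := by
      intro y a hy
      simp only [hh2] at hy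
      split at hy
      · exact absurd hy (by simp)
      · exact hval y a hy
    have hag : ∀ y ∈ t'.vars, h2 y = h y := by
      intro y hy
      simp only [hh2]
      rw [if_neg]
      rintro rfl
      exact hxn hy
    have e2' : G.eval h2 t' = G.eval h t' := eval_congr G t' hag
    have e2 : G.eval h2 t = none := by
      by_contra hc
      have := ((eval_spec G h2 t ht).1.1 hc).1 x hx
      simp [hh2] at this
    have hid : G.eval h2 t = G.eval h2 t' := hsat h2 hA2
    rw [e2, e2'] at hid
    exact het' hid.symm
  refine ⟨⟨fun x => ⟨fun hx => hsub ((hdom x).1 hx), hdom' x⟩, hval, ?_⟩, by rw [← evt, heq, evt']⟩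
  intro x y hxy
  exact hedge' x y hxy.1

/-- Backward helper. -/
lemma eval_eq_of_phom (G : AlgGraph) (t t' : GTerm X)
    (ht : t.Nontrivial) (ht' : t'.Nontrivial)
    (x0 x0' : X) (hx0 : t.leftVar = some x0) (hx0' : t'.leftVar = some x0')
    (hEq : PHomSet G t = PHomSet G t')
    (hL : ∀ h ∈ PHomSet G t, h x0 = h x0')
    (h : X → Option G.U) (hA : G.Assign h) (hne : G.eval h t ≠ none) :
    G.eval h t = G.eval h t' := by
  obtain ⟨hdom, hedge⟩ := (eval_spec G h t ht).1.1 hne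
  set h1 : X → Option G.U := fun y => if y ∈ t.vars then h y else none with hh1
  have hag : ∀ y ∈ t.vars, h y = h1 y := by
    intro y hy; simp [hh1, hy]
  have h1mem : h1 ∈ PHomSet G t := by
    refine ⟨fun x => ?_, fun x a hx => ?_, fun x y hxy => ?_⟩
    · constructor
      · intro hx
        by_contra hc
        simp [hh1, hc] at hx
      · intro hx
        simp only [hh1, if_pos hx]
        exact hdom x hx
    · simp only [hh1] at hx
      split at hx
      · exact hA x a hx
      · exact absurd hx (by simp)
    · obtain ⟨a, b, ha, hb, hE⟩ := hedge x y hxy.1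
      exact ⟨a, b, by rw [← hag x hxy.2.1]; exact ha, by rw [← hag y hxy.2.2]; exact hb, hE⟩
  have h1mem' : h1 ∈ PHomSet G t' := hEq ▸ h1mem
  obtain ⟨hdom', hval', hedge'⟩ := h1mem'
  have het1' : G.eval h1 t' ≠ none := by
    refine (eval_spec G h1 t' ht').1.2 ⟨fun x hx => (hdom' x).2 hx, fun x y hxy => ?_⟩
    exact hedge' x y ⟨hxy, (edges_mem_vars hxy).1, (edges_mem_vars hxy).2⟩
  -- vars t' ⊆ vars t (indeed equal)
  have hsub : ∀ y ∈ t'.vars, h y = h1 y := by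
    intro y hy
    have hne1 : h1 y ≠ none := (hdom' y).2 hy
    by_cases hyt : y ∈ t.vars
    · simp [hh1, hyt]
    · exact absurd (by simp [hh1, hyt]) hne1
  have e1 : G.eval h t = G.eval h1 t := eval_congr G t hag
  have e1' : G.eval h t' = G.eval h1 t' := eval_congr G t' hsub
  have het1 : G.eval h1 t ≠ none := e1 ▸ hne
  have evt : G.eval h1 t = h1 x0 := (eval_spec G h1 t ht).2 het1 x0 hx0
  have evt' : G.eval h1 t' = h1 x0' := (eval_spec G h1 t' ht').2 het1' x0' hx0'
  rw [e1, e1', evt, evt', hL h1 h1mem]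

end Aux

/-- `G ⊨ t ≈ t'` iff `Hom(G(t),G) = Hom(G(t'),G) =: H` and
`h(L(t)) = h(L(t'))` for every `h ∈ H`. -/
theorem statement_1 (G : AlgGraph) (X : Type) (t t' : GTerm X)
    (ht : t.Nontrivial) (ht' : t'.Nontrivial)
    (x0 x0' : X) (hx0 : t.leftVar = some x0) (hx0' : t'.leftVar = some x0') :
    G.SatId (t, t') ↔
      (PHomSet G t = PHomSet G t' ∧ ∀ h ∈ PHomSet G t, h x0 = h x0') := by
  constructor
  · intro hsat
    have hsat' : G.SatId (t', t) := fun h hA => (hsat h hA).symm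
    have fwd := phom_incl G t t' ht ht' x0 x0' hx0 hx0' hsat
    have bwd := phom_incl G t' t ht' ht x0' x0 hx0' hx0 hsat'
    refine ⟨Set.Subset.antisymm (fun h hm => (fwd h hm).1) (fun h hm => (bwd h hm).1),
      fun h hm => (fwd h hm).2⟩
  · rintro ⟨hEq, hL⟩ h hA
    by_cases hne : G.eval h t = none
    · by_cases hne' : G.eval h t' = none
      · show G.eval h t = G.eval h t'
        rw [hne, hne']
      · have hL' : ∀ h ∈ PHomSet G t', h x0' = h x0 := by
          intro g hg
          exact (hL g (hEq ▸ hg)).symm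
        exact (eval_eq_of_phom G t' t ht' ht x0' x0 hx0' hx0 hEq.symm hL' h hA hne').symm
    · exact eval_eq_of_phom G t t' ht ht' x0 x0' hx0 hx0' hEq hL h hA hne
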